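/- arXiv:2305.04716 — 2 statements merged into one kernel-verified Lean document; each statement's English description precedes it below -/
import Mathlib

section
/- Fix n ≥ 1, masses m_1, …, m_n > 0 and strictly increasing jump times 0 < t_1 < t_2 < … < t_n. For q > 0 define the time-scaled walk Z^q(s) = Σ_{i=1}^n m_i·1[t_i/q ≤ s] − s, with left limits Z^q(t⁻) = Σ_i m_i·1[t_i/q < t] − t. Let 1 ≤ j ≤ k < n, set Ξ = m_j + m_{j+1} + … + m_k, and suppose there is T with 0 < T ≤ q such that t_{k+1} − t_j = Ξ · T. Then for any base length m_l > 0, the cumulative Poisson intensity (q − T) · m_l · Ξ equals q · m_l · ( Z^q((t_{k+1}/q)⁻) − Z^q((t_j/q)⁻) ); equivalently, Z^q((t_{k+1}/q)⁻) − Z^q((t_j/q)⁻) = Ξ · (1 − T/q). (This is Proposition 3.3 of the paper: on the event {T_{l;j−k} ≤ q}, the cumulative arrival rate to the Poisson process ζ^{l;j−k} up to time q equals the area of the parallelogram region of the excursion mosaic matched to it — base m_l times height Z^q((t_{k+1}/q)⁻) − Z^q((t_j/q)⁻) — multiplied by q.) -/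
open Finset

/-- Proposition 3.3 of the paper: the cumulative arrival rate `(q - T) * m_l * Ξ` of the
Poisson process `ζ^{l;j-k}` up to time `q` equals `q` times the area of the matched
parallelogram of the excursion mosaic, whose base is `m_l` and whose height is
`Z^q((t_{k+1}/q)⁻) − Z^q((t_j/q)⁻)`; equivalently this height equals `Ξ (1 − T/q)`. -/
theorem cumulative_rate_eq_area_of_parallelogram
    (n : ℕ) (hn : 1 ≤ n) (m : Fin n → ℝ) (hm : ∀ i, 0 < m i)
    (t : Fin n → ℝ) (ht0 : ∀ i, 0 < t i) (htmono : StrictMono t)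
    (q : ℝ) (hq : 0 < q)
    (Zqleft : ℝ → ℝ)
    (hZqleft : ∀ s, Zqleft s = (∑ i, if t i / q < s then m i else 0) - s)
    (j k : Fin n) (hjk : j ≤ k) (hk : (k : ℕ) + 1 < n)
    (Ξ : ℝ) (hΞ : Ξ = ∑ i ∈ Finset.Icc j k, m i)
    (T : ℝ) (hT0 : 0 < T) (hTq : T ≤ q)
    (hmerge : t ⟨(k : ℕ) + 1, hk⟩ - t j = Ξ * T)
    (ml : ℝ) (hml : 0 < ml) :
    (q - T) * ml * Ξ
        = q * ml * (Zqleft (t ⟨(k : ℕ) + 1, hk⟩ / q) - Zqleft (t j / q)) ∧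
      Zqleft (t ⟨(k : ℕ) + 1, hk⟩ / q) - Zqleft (t j / q) = Ξ * (1 - T / q) := by
  set k' : Fin n := ⟨(k : ℕ) + 1, hk⟩ with hk'
  have key : ∀ x : Fin n, (∑ i, if t i / q < t x / q then m i else 0)
      = ∑ i ∈ Finset.Iio x, m i := by
    intro x
    rw [← Finset.sum_filter]
    congr 1
    ext i
    simp only [Finset.mem_filter, Finset.mem_univ, true_and, Finset.mem_Iio,
      div_lt_div_iff_of_pos_right hq, htmono.lt_iff_lt]
  have hsub : (∑ i ∈ Finset.Iio k', m i) - (∑ i ∈ Finset.Iio j, m i)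
      = ∑ i ∈ Finset.Icc j k, m i := by
    have hss : Finset.Iio j ⊆ Finset.Iio k' := by
      apply Finset.Iio_subset_Iio
      exact le_of_lt (lt_of_le_of_lt hjk (Fin.lt_def.mpr (Nat.lt_succ_self _)))
    rw [sub_eq_iff_eq_add, ← Finset.sum_union]
    · congr 1
      ext i
      simp only [Finset.mem_union, Finset.mem_Icc, Finset.mem_Iio,
        Fin.lt_iff_val_lt_val, Fin.le_iff_val_le_val, hk']
      omega
    · rw [Finset.disjoint_left]
      intro i hi hi'
      simp only [Finset.mem_Icc, Finset.mem_Iio] at hi hi'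
      exact absurd hi' (not_lt.mpr hi.1)
  have height : Zqleft (t k' / q) - Zqleft (t j / q) = Ξ * (1 - T / q) := by
    rw [hZqleft, hZqleft, key, key]
    have : (t k' - t j) / q = Ξ * T / q := by rw [hmerge]
    have hΞT : t k' / q - t j / q = Ξ * (T / q) := by
      field_simp at this ⊢
      linarith [this]
    rw [hΞ] at hΞT ⊢
    have := hsub
    ring_nf
    ring_nf at hΞT this
    linarith
  refine ⟨?_, height⟩
  rw [height]
  field_simp
end

section
/- Fix n ≥ 1, masses m_1, …, m_n > 0 and strictly increasing jump times 0 < t_1 < t_2 < … < t_n, and define Z(s) = Σ_{i=1}^n m_i·1[t_i ≤ s] − s for s ≥ 0, with left limits Z(t⁻) = Σ_{i=1}^n m_i·1[t_i < t] − t, and the reflected walk B(s) = Z(s) − inf_{0 ≤ u ≤ s} Z(u). Suppose a = t_j for some j, b > a, and [a, b] is an excursion interval of B above 0, in the sense that inf_{0 ≤ u ≤ s} Z(u) = Z(a⁻) for all s ∈ [a, b], B(s) > 0 for all s ∈ [a, b), and B(b) = 0. Then the area under the excursion satisfies ∫_a^b B(s) ds = Σ_{i : a ≤ t_i ≤ b}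 ( m_i·(Z(t_i⁻) − Z(a⁻)) + m_i²/2 ). (This is the slice decomposition underlying Corollary 3.4 of the paper: the region under an excursion of B is the union of the vertex slices — for each carried vertex, a right isosceles triangle of area m_i²/2 together with parallelograms of total area m_i·B(t_i⁻) — whose pairwise intersections have zero Lebesgue measure; consequently the cumulative rate of surplus edges in the corresponding connected component of the multigraph equals q times the area under the excursion.) -/
open Finset

open MeasureTheory
set_option maxHeartbeats 1000000

lemma stepIntegrable (c k a b : ℝ) (hk : 0 ≤ k) :
    IntervalIntegrable (fun s => if c ≤ s then k else 0) volume a b := by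
  apply Monotone.intervalIntegrable
  intro x y hxy
  dsimp only
  split_ifs with h1 h2
  · exact le_refl k
  · exact absurd (le_trans h1 hxy) h2
  · exact hk
  · exact le_refl 0

lemma stepInt (c k a b : ℝ) (hab : a ≤ b) :
    ∫ s in a..b, (if c ≤ s then k else 0) = k * max (b - max a c) 0 := by
  rw [intervalIntegral.integral_of_le hab]
  have h1 : ∀ s : ℝ, (if c ≤ s then k else 0) = Set.indicator (Set.Ici c) (fun _ => k) s := by
    intro s; simp [Set.indicator_apply]
  simp only [h1]
  rw [MeasureTheory.setIntegral_indicator measurableSet_Ici, MeasureTheory.setIntegral_const]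
  have hvol : volume (Set.Ioc a b ∩ Set.Ici c) = ENNReal.ofReal (b - max a c) := by
    rcases le_or_gt c a with h | h
    · rw [max_eq_left h]
      have he : Set.Ioc a b ∩ Set.Ici c = Set.Ioc a b := by
        apply Set.inter_eq_left.mpr; intro x hx; exact le_trans h (le_of_lt hx.1)
      rw [he, Real.volume_Ioc]
    · rw [max_eq_right h.le]
      have he : Set.Ioc a b ∩ Set.Ici c = Set.Icc c b := by
        ext x
        simp only [Set.mem_inter_iff, Set.mem_Ioc, Set.mem_Icc, Set.mem_Ici]
        constructor
        · rintro ⟨⟨_, h2⟩, h3⟩; exact ⟨h3, h2⟩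
        · rintro ⟨h1', h2⟩; exact ⟨⟨lt_of_lt_of_le h h1', h2⟩, h1'⟩
      rw [he, Real.volume_Icc]
  rw [measureReal_def, hvol]
  rcases le_or_gt (b - max a c) 0 with h | h
  · rw [ENNReal.ofReal_eq_zero.mpr h]
    simp [max_eq_right h]
  · rw [ENNReal.toReal_ofReal h.le, max_eq_left h.le]
    simp [mul_comm]

lemma offDiag_sum {n : ℕ} (S : Finset (Fin n)) (g : Fin n → ℝ) :
    2 * ∑ i ∈ S, g i * ∑ k ∈ S.filter (fun k => k < i), g k + ∑ i ∈ S, (g i)^2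
      = (∑ i ∈ S, g i)^2 := by
  have hsq : (∑ i ∈ S, g i)^2 = ∑ i ∈ S, ∑ k ∈ S, g i * g k := by
    rw [sq, Finset.sum_mul_sum]
  have hpt : ∀ i k : Fin n, g i * g k =
      (if k < i then g i * g k else 0) + (if i < k then g i * g k else 0)
        + (if i = k then g i * g k else 0) := by
    intro i k
    rcases lt_trichotomy i k with h | h | h
    · simp [h, asymm h, h.ne]
    · simp [h, lt_irrefl]
    · simp [h, asymm h, (ne_of_lt h).symm]
  have hT1 : ∀ i : Fin n, (∑ k ∈ S, if k < i then g i * g k else 0)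
      = g i * ∑ k ∈ S.filter (fun k => k < i), g k := by
    intro i
    rw [Finset.mul_sum, Finset.sum_filter]
  have hT3 : ∀ i ∈ S, (∑ k ∈ S, if i = k then g i * g k else 0) = (g i)^2 := by
    intro i hi
    rw [Finset.sum_ite_eq S i (fun k => g i * g k)]
    simp [hi, sq]
  have hT2 : (∑ i ∈ S, ∑ k ∈ S, if i < k then g i * g k else 0)
      = ∑ i ∈ S, ∑ k ∈ S, if k < i then g i * g k else 0 := by
    rw [Finset.sum_comm]
    apply Finset.sum_congr rfl
    intro i _
    apply Finset.sum_congr rfl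
    intro k _
    split_ifs with h
    · ring
    · rfl
  calc 2 * ∑ i ∈ S, g i * ∑ k ∈ S.filter (fun k => k < i), g k + ∑ i ∈ S, (g i)^2
      = (∑ i ∈ S, ∑ k ∈ S, if k < i then g i * g k else 0)
        + (∑ i ∈ S, ∑ k ∈ S, if i < k then g i * g k else 0)
        + (∑ i ∈ S, ∑ k ∈ S, if i = k then g i * g k else 0) := by
        rw [hT2]
        rw [Finset.sum_congr rfl hT3, Finset.sum_congr rfl (fun i _ => hT1 i)]
        ring
    _ = ∑ i ∈ S, ∑ k ∈ S, g i * g k := by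
        rw [← Finset.sum_add_distrib, ← Finset.sum_add_distrib]
        apply Finset.sum_congr rfl
        intro i _
        rw [← Finset.sum_add_distrib, ← Finset.sum_add_distrib]
        exact (Finset.sum_congr rfl fun k _ => (hpt i k).symm)
    _ = (∑ i ∈ S, g i)^2 := hsq.symm


/-- Slice decomposition of the area under an excursion of the reflected breadth-first
walk: the area under the excursion on `[a, b]` equals the sum, over the vertices `i`
carried by the excursion (those with `a ≤ t i ≤ b`), of the slice areas
`m i * (Z(t i⁻) − Z(a⁻)) + m i ^ 2 / 2`. -/
theorem area_under_excursion_eq_sum_of_slices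
    (n : ℕ) (hn : 1 ≤ n) (m : Fin n → ℝ) (hm : ∀ i, 0 < m i)
    (t : Fin n → ℝ) (ht0 : ∀ i, 0 < t i) (htmono : StrictMono t)
    (Z Zleft B : ℝ → ℝ)
    (hZ : ∀ s, Z s = (∑ i, if t i ≤ s then m i else 0) - s)
    (hZleft : ∀ s, Zleft s = (∑ i, if t i < s then m i else 0) - s)
    (hB : ∀ s, B s = Z s - sInf (Z '' Set.Icc 0 s))
    (j : Fin n) (a b : ℝ) (ha : a = t j) (hab : a < b)
    (hinf : ∀ s ∈ Set.Icc a b, sInf (Z '' Set.Icc 0 s) = Zleft a)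
    (hpos : ∀ s ∈ Set.Ico a b, 0 < B s) (hBb : B b = 0) :
    ∫ s in a..b, B s
      = ∑ i ∈ Finset.univ.filter (fun i => a ≤ t i ∧ t i ≤ b),
          (m i * (Zleft (t i) - Zleft a) + m i ^ 2 / 2) := by
  have hba : a ≤ b := hab.le
  set S : Finset (Fin n) := Finset.univ.filter (fun i => a ≤ t i ∧ t i ≤ b) with hS
  set A : ℝ := ∑ i ∈ Finset.univ.filter (fun i => t i < a), m i with hA
  set M : ℝ := ∑ i ∈ S, m i with hMdef
  -- Zleft a
  have hZla : Zleft a = A - a := by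
    rw [hZleft a, hA, Finset.sum_filter]
  -- the b-split of the indicator sums
  have hsplitb : (∑ i, if t i ≤ b then m i else 0) = A + M := by
    have hpt : ∀ i : Fin n, (if t i ≤ b then m i else 0)
        = (if t i < a then m i else 0) + (if a ≤ t i ∧ t i ≤ b then m i else 0) := by
      intro i
      rcases lt_or_ge (t i) a with h | h
      · simp [h, le_of_lt (lt_trans h hab), not_le.mpr h]
      · rcases le_or_gt (t i) b with h2 | h2
        · simp [h, h2, not_lt.mpr h]
        · simp [not_le.mpr h2, not_lt.mpr h]
    rw [Finset.sum_congr rfl (fun i _ => hpt i), Finset.sum_add_distrib]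
    rw [hA, hMdef, hS, Finset.sum_filter, Finset.sum_filter]
  -- M = b - a
  have hZbeq : Z b = Zleft a := by
    have h1 := hB b
    rw [hinf b ⟨hba, le_refl b⟩] at h1
    linarith [hBb]
  have hM : M = b - a := by
    rw [hZ b, hsplitb, hZla] at hZbeq
    linarith
  -- LHS: integral computation
  have hcongr : Set.EqOn B (fun s => Z s - Zleft a) (Set.uIcc a b) := by
    intro s hs
    rw [Set.uIcc_of_le hba] at hs
    simp only [hB s, hinf s hs]
  have hint1 : IntervalIntegrable (fun s => ∑ i, if t i ≤ s then m i else 0) volume a b := by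
    have hfe : (fun s : ℝ => ∑ i : Fin n, if t i ≤ s then m i else 0)
        = ∑ i : Fin n, (fun s : ℝ => if t i ≤ s then m i else 0) := by
      funext s
      simp [Finset.sum_apply]
    rw [hfe]
    exact IntervalIntegrable.sum Finset.univ
      (fun i _ => stepIntegrable (t i) (m i) a b (hm i).le)
  have hint2 : IntervalIntegrable (fun s : ℝ => s + Zleft a) volume a b :=
    (continuous_id.add continuous_const).intervalIntegrable a b
  have hLHS : ∫ s in a..b, B s
      = (∑ i, m i * max (b - max a (t i)) 0) - ((b^2 - a^2)/2 + (b - a) * Zleft a) := by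
    rw [intervalIntegral.integral_congr hcongr]
    have heq : (fun s => Z s - Zleft a)
        = fun s => (∑ i, if t i ≤ s then m i else 0) - (s + Zleft a) := by
      funext s; rw [hZ s]; ring
    rw [heq, intervalIntegral.integral_sub hint1 hint2]
    rw [intervalIntegral.integral_finset_sum
      (fun i _ => stepIntegrable (t i) (m i) a b (hm i).le)]
    rw [intervalIntegral.integral_add intervalIntegral.intervalIntegrable_id intervalIntegrable_const,
      integral_id, intervalIntegral.integral_const]
    congr 1
    exact Finset.sum_congr rfl (fun i _ => stepInt (t i) (m i) a b hba)
  -- split the sum of maxes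
  have hmaxes : (∑ i, m i * max (b - max a (t i)) 0)
      = A * (b - a) + ∑ i ∈ S, m i * (b - t i) := by
    have hpt : ∀ i : Fin n, m i * max (b - max a (t i)) 0
        = (if t i < a then m i * (b - a) else 0)
          + (if a ≤ t i ∧ t i ≤ b then m i * (b - t i) else 0) := by
      intro i
      rcases lt_or_ge (t i) a with h | h
      · rw [max_eq_left h.le, max_eq_left (by linarith)]
        simp [h, not_le.mpr h]
      · rw [max_eq_right h]
        rcases le_or_gt (t i) b with h2 | h2
        · rw [max_eq_left (by linarith)]
          simp [not_lt.mpr h, h, h2]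
        · rw [max_eq_right (by linarith)]
          simp [not_lt.mpr h, not_le.mpr h2]
    rw [Finset.sum_congr rfl (fun i _ => hpt i), Finset.sum_add_distrib]
    congr 1
    · rw [← Finset.sum_filter, hA, Finset.sum_mul]
    · rw [← Finset.sum_filter, hS]
  -- RHS summands
  have hZl_diff : ∀ i ∈ S, Zleft (t i) - Zleft a
      = (∑ k ∈ S.filter (fun k => k < i), m k) - (t i - a) := by
    intro i hi
    rw [hS, Finset.mem_filter] at hi
    obtain ⟨-, hia, hib⟩ := hi
    have hpt : ∀ k : Fin n, (if t k < t i then m k else 0)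
        = (if t k < a then m k else 0)
          + (if (a ≤ t k ∧ t k ≤ b) ∧ k < i then m k else 0) := by
      intro k
      rcases lt_or_ge (t k) a with h | h
      · simp [h, lt_of_lt_of_le h hia, not_le.mpr h]
      · rcases lt_or_ge (t k) (t i) with h2 | h2
        · simp [h2, not_lt.mpr h, h, le_trans h2.le hib, htmono.lt_iff_lt.mp h2]
        · have hki : ¬ k < i := fun hk => absurd (htmono hk) (not_lt.mpr h2)
          simp [not_lt.mpr h2, not_lt.mpr h, hki]
    rw [hZleft (t i), hZleft a]
    rw [Finset.sum_congr rfl (fun k _ => hpt k), Finset.sum_add_distrib]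
    have : (∑ k, if (a ≤ t k ∧ t k ≤ b) ∧ k < i then m k else 0)
        = ∑ k ∈ S.filter (fun k => k < i), m k := by
      rw [hS, Finset.filter_filter, Finset.sum_filter]
    rw [this]
    ring
  -- rewrite RHS
  have hRHS : (∑ i ∈ S, (m i * (Zleft (t i) - Zleft a) + m i ^ 2 / 2))
      = (∑ i ∈ S, m i * ∑ k ∈ S.filter (fun k => k < i), m k)
        - (∑ i ∈ S, m i * (t i - a)) + (∑ i ∈ S, (m i)^2) / 2 := by
    rw [Finset.sum_div, ← Finset.sum_sub_distrib, ← Finset.sum_add_distrib]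
    apply Finset.sum_congr rfl
    intro i hi
    rw [hZl_diff i hi]
    ring
  -- the off-diagonal identity
  have hoff := offDiag_sum S m
  -- Sb + Sta
  have hcomb : (∑ i ∈ S, m i * (b - t i)) + (∑ i ∈ S, m i * (t i - a)) = M * (b - a) := by
    rw [← Finset.sum_add_distrib, hMdef, Finset.sum_mul]
    apply Finset.sum_congr rfl
    intro i _
    ring
  rw [hLHS, hmaxes, hRHS, hZla]
  -- now pure algebra
  linear_combination hcomb - (1/2) * hoff + (((b - a) - M)/2) * hM
end
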